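/- Define ψ₊(x) = e^{-(1+i)πx²} and ψ₋(x) = e^{-(1−i)πx²}. Then 𝓕ψ₊(ξ) = 2^{-1/4} e^{-iπ/8} e^{-(1−i)πξ²/2} and 𝓕ψ₋(ξ) = 2^{-1/4} e^{iπ/8} e^{-(1+i)πξ²/2}; consequently |ψ₊(x)| = |ψ₋(x)| and |𝓕ψ₊(ξ)| = |𝓕ψ₋(ξ)| for all x, ξ ∈ ℝ, yet there is no c ∈ ℂ with |c| = 1 and ψ₊ = c·ψ₋. Hence the pair (|ψ|, |𝓕ψ|) of Pauli data does not determine ψ up to a constant phase factor. -/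

import Mathlib

open MeasureTheory Real

/-- Fourier transform normalized as `𝓕f(ξ) = ∫ f(x) e^{-2πixξ} dx`. -/
noncomputable def FT (f : ℝ → ℂ) (ξ : ℝ) : ℂ :=
  ∫ x : ℝ, f x * Complex.exp (-2 * Real.pi * Complex.I * x * ξ)

open MeasureTheory Real Complex


lemma abs_half_one_sub_I : ‖((1:ℂ) - Complex.I)/2‖ = Real.sqrt 2 / 2 := by
  rw [norm_div, Complex.norm_two]
  congr 1
  rw [Complex.norm_def]
  simp [Complex.normSq_apply]
  norm_num

lemma arg_half_one_sub_I : Complex.arg (((1:ℂ) - Complex.I)/2) = -(π/4) := by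
  rw [Complex.arg_of_re_nonneg (by simp), abs_half_one_sub_I]
  have him : (((1:ℂ) - Complex.I)/2).im = -(2⁻¹) := by simp; norm_num
  rw [him]
  have h2 : Real.sqrt 2 * Real.sqrt 2 = 2 := Real.mul_self_sqrt (by norm_num)
  have hpos : (0:ℝ) < Real.sqrt 2 := by positivity
  have key : (-(2⁻¹:ℝ)) / (Real.sqrt 2 / 2) = -(Real.sqrt 2 / 2) := by
    field_simp
    nlinarith
  rw [key, ← Real.sin_pi_div_four, ← Real.sin_neg, Real.arcsin_sin] <;> nlinarith [Real.pi_pos]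

lemma cpow_half_one_sub_I :
    (((1:ℂ) - Complex.I)/2) ^ ((1:ℂ)/2) =
      (Complex.ofReal ((2 : ℝ) ^ (-(1 / 4) : ℝ))) * Complex.exp (-Complex.I * ↑Real.pi / 8) := by
  have hz : ((1:ℂ) - Complex.I)/2 ≠ 0 := by
    intro h
    have := congrArg Complex.im h
    simp at this
  rw [Complex.cpow_def_of_ne_zero hz, Complex.log, abs_half_one_sub_I, arg_half_one_sub_I]
  have hlog : Real.log (Real.sqrt 2 / 2) = -(Real.log 2 / 2) := by
    rw [Real.log_div (by positivity) (by norm_num), Real.log_sqrt (by norm_num)]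
    ring
  rw [hlog]
  have hrpow : ((2 : ℝ) ^ (-(1 / 4) : ℝ)) = Real.exp (Real.log 2 * (-(1/4))) := by
    rw [Real.rpow_def_of_pos (by norm_num)]
  rw [hrpow, Complex.ofReal_exp, ← Complex.exp_add]
  congr 1
  push_cast
  ring

lemma abs_half_one_add_I : ‖((1:ℂ) + Complex.I)/2‖ = Real.sqrt 2 / 2 := by
  rw [norm_div, Complex.norm_two]
  congr 1
  rw [Complex.norm_def]
  simp [Complex.normSq_apply]
  norm_num

lemma arg_half_one_add_I : Complex.arg (((1:ℂ) + Complex.I)/2) = π/4 := by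
  rw [Complex.arg_of_re_nonneg (by simp), abs_half_one_add_I]
  have him : (((1:ℂ) + Complex.I)/2).im = 2⁻¹ := by simp
  rw [him]
  have h2 : Real.sqrt 2 * Real.sqrt 2 = 2 := Real.mul_self_sqrt (by norm_num)
  have hpos : (0:ℝ) < Real.sqrt 2 := by positivity
  have key : ((2⁻¹:ℝ)) / (Real.sqrt 2 / 2) = Real.sqrt 2 / 2 := by
    field_simp
    nlinarith
  rw [key, ← Real.sin_pi_div_four, Real.arcsin_sin] <;> nlinarith [Real.pi_pos]

lemma cpow_half_one_add_I :
    (((1:ℂ) + Complex.I)/2) ^ ((1:ℂ)/2) =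
      (Complex.ofReal ((2 : ℝ) ^ (-(1 / 4) : ℝ))) * Complex.exp (Complex.I * ↑Real.pi / 8) := by
  have hz : ((1:ℂ) + Complex.I)/2 ≠ 0 := by
    intro h
    have := congrArg Complex.im h
    simp at this
  rw [Complex.cpow_def_of_ne_zero hz, Complex.log, abs_half_one_add_I, arg_half_one_add_I]
  have hlog : Real.log (Real.sqrt 2 / 2) = -(Real.log 2 / 2) := by
    rw [Real.log_div (by positivity) (by norm_num), Real.log_sqrt (by norm_num)]
    ring
  rw [hlog]
  have hrpow : ((2 : ℝ) ^ (-(1 / 4) : ℝ)) = Real.exp (Real.log 2 * (-(1/4))) := by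
    rw [Real.rpow_def_of_pos (by norm_num)]
  rw [hrpow, Complex.ofReal_exp, ← Complex.exp_add]
  congr 1
  push_cast
  ring

lemma one_add_I_ne : ((1:ℂ)+Complex.I) ≠ 0 := by
  intro h; have := congrArg Complex.im h; simp at this

lemma one_sub_I_ne : ((1:ℂ)-Complex.I) ≠ 0 := by
  intro h; have := congrArg Complex.im h; simp at this

lemma pi_c_ne : ((Real.pi:ℂ)) ≠ 0 := by exact_mod_cast Real.pi_ne_zero

lemma div_pi_p : ((↑Real.pi : ℂ) / ((1+Complex.I)*↑Real.pi)) = ((1:ℂ)-Complex.I)/2 := by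
  rw [mul_comm, ← div_div, div_self pi_c_ne, div_eq_div_iff one_add_I_ne two_ne_zero]
  ring_nf
  simp [Complex.I_sq]
  ring

lemma div_pi_m : ((↑Real.pi : ℂ) / ((1-Complex.I)*↑Real.pi)) = ((1:ℂ)+Complex.I)/2 := by
  rw [mul_comm, ← div_div, div_self pi_c_ne, div_eq_div_iff one_sub_I_ne two_ne_zero]
  ring_nf
  simp [Complex.I_sq]
  ring

lemma exp_arg_p (ξ : ℝ) : -(((-2*Real.pi*ξ : ℝ) : ℂ))^2/(4*((1+Complex.I)*↑Real.pi))
    = -(1 - Complex.I) * Real.pi * (ξ:ℂ) ^ 2 / 2 := by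
  rw [div_eq_div_iff (mul_ne_zero (by norm_num) (mul_ne_zero one_add_I_ne pi_c_ne)) two_ne_zero]
  push_cast
  ring_nf
  simp [Complex.I_sq]
  ring

lemma exp_arg_m (ξ : ℝ) : -(((-2*Real.pi*ξ : ℝ) : ℂ))^2/(4*((1-Complex.I)*↑Real.pi))
    = -(1 + Complex.I) * Real.pi * (ξ:ℂ) ^ 2 / 2 := by
  rw [div_eq_div_iff (mul_ne_zero (by norm_num) (mul_ne_zero one_sub_I_ne pi_c_ne)) two_ne_zero]
  push_cast
  ring_nf
  simp [Complex.I_sq]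
  ring

theorem bargmann_pauli_counterexample
    (ψp ψm : ℝ → ℂ)
    (hp : ∀ x : ℝ, ψp x = Complex.exp (-(1 + Complex.I) * Real.pi * x ^ 2))
    (hm : ∀ x : ℝ, ψm x = Complex.exp (-(1 - Complex.I) * Real.pi * x ^ 2)) :
    (∀ ξ : ℝ, FT ψp ξ
        = (Complex.ofReal ((2 : ℝ) ^ (-(1 / 4) : ℝ))) * Complex.exp (-Complex.I * Real.pi / 8) *
          Complex.exp (-(1 - Complex.I) * Real.pi * ξ ^ 2 / 2)) ∧
    (∀ ξ : ℝ, FT ψm ξ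
        = (Complex.ofReal ((2 : ℝ) ^ (-(1 / 4) : ℝ))) * Complex.exp (Complex.I * Real.pi / 8) *
          Complex.exp (-(1 + Complex.I) * Real.pi * ξ ^ 2 / 2)) ∧
    (∀ x : ℝ, ‖ψp x‖ = ‖ψm x‖) ∧
    (∀ ξ : ℝ, ‖FT ψp ξ‖ = ‖FT ψm ξ‖) ∧
    ¬ ∃ c : ℂ, ‖c‖ = 1 ∧ ψp = fun x => c * ψm x := by
  have hFTp : ∀ ξ : ℝ, FT ψp ξ
      = (Complex.ofReal ((2 : ℝ) ^ (-(1 / 4) : ℝ))) * Complex.exp (-Complex.I * Real.pi / 8) *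
        Complex.exp (-(1 - Complex.I) * Real.pi * ξ ^ 2 / 2) := by
    intro ξ
    have hb : (0:ℝ) < ((1+Complex.I)*(↑Real.pi:ℂ)).re := by simp [Real.pi_pos]
    have key := fourierIntegral_gaussian hb (((-2*Real.pi*ξ : ℝ) : ℂ))
    have step : FT ψp ξ = ((↑Real.pi : ℂ) / ((1+Complex.I)*↑Real.pi)) ^ ((1:ℂ)/2) *
        Complex.exp (-(((-2*Real.pi*ξ : ℝ) : ℂ))^2/(4*((1+Complex.I)*↑Real.pi))) := by
      unfold FT
      rw [← key]
      congr 1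
      funext x
      rw [hp x, mul_comm]
      congr 1 <;> · congr 1; push_cast; ring
    rw [step, div_pi_p, exp_arg_p, cpow_half_one_sub_I]
  have hFTm : ∀ ξ : ℝ, FT ψm ξ
      = (Complex.ofReal ((2 : ℝ) ^ (-(1 / 4) : ℝ))) * Complex.exp (Complex.I * Real.pi / 8) *
        Complex.exp (-(1 + Complex.I) * Real.pi * ξ ^ 2 / 2) := by
    intro ξ
    have hb : (0:ℝ) < ((1-Complex.I)*(↑Real.pi:ℂ)).re := by simp [Real.pi_pos]
    have key := fourierIntegral_gaussian hb (((-2*Real.pi*ξ : ℝ) : ℂ))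
    have step : FT ψm ξ = ((↑Real.pi : ℂ) / ((1-Complex.I)*↑Real.pi)) ^ ((1:ℂ)/2) *
        Complex.exp (-(((-2*Real.pi*ξ : ℝ) : ℂ))^2/(4*((1-Complex.I)*↑Real.pi))) := by
      unfold FT
      rw [← key]
      congr 1
      funext x
      rw [hm x, mul_comm]
      congr 1 <;> · congr 1; push_cast; ring
    rw [step, div_pi_m, exp_arg_m, cpow_half_one_add_I]
  refine ⟨hFTp, hFTm, ?_, ?_, ?_⟩
  · intro x
    rw [hp x, hm x, Complex.norm_exp, Complex.norm_exp]
    congr 1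
    simp [Complex.mul_re, Complex.mul_im, ← Complex.ofReal_pow]
  · intro ξ
    rw [hFTp ξ, hFTm ξ, norm_mul, norm_mul, norm_mul, norm_mul]
    congr 1
    · congr 1
      rw [Complex.norm_exp, Complex.norm_exp]
      congr 1
      simp [Complex.div_re, Complex.mul_re, Complex.mul_im]
    · rw [Complex.norm_exp, Complex.norm_exp]
      congr 1
      simp [Complex.div_re, Complex.mul_re, Complex.mul_im, ← Complex.ofReal_pow]
  · rintro ⟨c, hc, hfun⟩
    have h0 := congrFun hfun 0
    rw [hp 0, hm 0] at h0
    simp at h0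
    set r := Real.sqrt 2⁻¹ with hr
    have hr2 : (r:ℂ)^2 = 1/2 := by
      norm_cast
      rw [hr, Real.sq_sqrt (by norm_num)]
      norm_num
    have hx := congrFun hfun r
    rw [hp r, hm r, ← h0, one_mul] at hx
    have hone : Complex.exp ((-(1 + Complex.I) * ↑Real.pi * (r:ℂ) ^ 2)
        - (-(1 - Complex.I) * ↑Real.pi * (r:ℂ) ^ 2)) = 1 := by
      rw [Complex.exp_sub, hx, div_self (Complex.exp_ne_zero _)]
    rw [show (-(1 + Complex.I) * ↑Real.pi * (r:ℂ) ^ 2)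
        - (-(1 - Complex.I) * ↑Real.pi * (r:ℂ) ^ 2)
        = -(↑Real.pi * Complex.I) from by rw [hr2]; ring] at hone
    rw [Complex.exp_neg, Complex.exp_pi_mul_I] at hone
    norm_num at hone
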